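/- If N is a σ-locally finite family of subsets of a paracompact Hausdorff space X, then for any subspace C ⊆ X that is countably cellular (every disjoint family of nonempty open subsets of C is countable), the subfamily {N ∈ N : C ∩ N ≠ ∅} is at most countable. -/

import Mathlib

open Set Topology

/-- A single locally finite family meets a countably cellular subspace only countably often. -/
theorem locally_finite_meets_countably_cellular_countably_aux
    {X : Type*} [TopologicalSpace X] [ParacompactSpace X] [T2Space X]
    (𝒢 : Set (Set X))
    (hlf : ∀ x : X, ∃ U ∈ nhds x, {N ∈ 𝒢 | (N ∩ U).Nonempty}.Finite)
    (C : Set X)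
    (hcc : ∀ 𝒪 : Set (Set C), (∀ O ∈ 𝒪, IsOpen O ∧ O.Nonempty) →
      𝒪.Pairwise Disjoint → 𝒪.Countable) :
    {N ∈ 𝒢 | (C ∩ N).Nonempty}.Countable := by
  classical
  rcases isEmpty_or_nonempty X with hX | hX
  · refine Set.Countable.mono ?_ Set.countable_empty
    rintro N ⟨-, x, -⟩
    exact (IsEmpty.false x).elim
  choose U hU hUfin using hlf
  set T : Set (Set X) := {N ∈ 𝒢 | (C ∩ N).Nonempty} with hT
  -- pick a point of `C ∩ N` for each `N ∈ T`
  have hpick : ∀ N ∈ T, ∃ x, x ∈ C ∩ N := fun N hN => hN.2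
  choose! f hf using hpick
  set A : Set X := f '' T with hA
  have hfC : ∀ N ∈ T, f N ∈ C := fun N hN => (hf N hN).1
  have hfN : ∀ N ∈ T, f N ∈ N := fun N hN => (hf N hN).2
  have hAC : A ⊆ C := by
    rintro a ⟨N, hN, rfl⟩; exact hfC N hN
  -- `A` is locally finite: each `U z` contains finitely many points of `A`
  have hAfin : ∀ z : X, (A ∩ U z).Finite := by
    intro z
    refine ((hUfin z).image f).subset ?_
    rintro a ⟨⟨N, hN, rfl⟩, haU⟩
    exact ⟨N, ⟨hN.1, ⟨f N, hfN N hN, haU⟩⟩, rfl⟩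
  -- shrink to open `W z ∋ z` with `W z ∩ A ⊆ {z}` (using T1)
  have hW : ∀ z : X, ∃ W : Set X, IsOpen W ∧ z ∈ W ∧ W ∩ A ⊆ {z} := by
    intro z
    have hF : ((A ∩ U z) \ {z}).Finite := (hAfin z).diff
    refine ⟨interior (U z) ∩ ⋂ a ∈ (A ∩ U z) \ {z}, {a}ᶜ,
      isOpen_interior.inter (hF.isOpen_biInter fun a _ => isOpen_compl_singleton), ?_, ?_⟩
    · refine ⟨mem_interior_iff_mem_nhds.2 (hU z), ?_⟩
      simp only [mem_iInter]
      rintro a ⟨_, haz⟩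
      exact fun h => haz (by simpa using h.symm)
    · rintro x ⟨⟨hxU, hxI⟩, hxA⟩
      by_contra hxz
      have hxF : x ∈ (A ∩ U z) \ {z} := ⟨⟨hxA, interior_subset hxU⟩, hxz⟩
      exact (mem_iInter₂.1 hxI x hxF) rfl
  choose W hWo hWz hWA using hW
  -- regularity: shrink further to `W' z` with `closure (W' z) ⊆ W z`
  have hW' : ∀ z : X, ∃ W' : Set X, IsOpen W' ∧ z ∈ W' ∧ closure W' ⊆ W z := by
    intro z
    obtain ⟨t, htn, htc, hts⟩ :=
      exists_mem_nhds_isClosed_subset ((hWo z).mem_nhds (hWz z))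
    exact ⟨interior t, isOpen_interior, mem_interior_iff_mem_nhds.2 htn,
      (closure_minimal interior_subset htc).trans hts⟩
  choose W' hW'o hW'z hW'cl using hW'
  -- paracompactness: locally finite open refinement `v`
  obtain ⟨v, hvo, hvcov, hvlf, hvsub⟩ :=
    precise_refinement W' hW'o (iUnion_eq_univ_iff.2 fun z => ⟨z, hW'z z⟩)
  have hclA : ∀ z : X, closure (v z) ∩ A ⊆ {z} := by
    intro z
    exact (inter_subset_inter_left A ((closure_mono (hvsub z)).trans (hW'cl z))).trans (hWA z)
  -- separating open sets
  set g : X → X → Set X := fun a z => if a ∈ closure (v z) then ∅ else closure (v z) with hg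
  have hglf : ∀ a, LocallyFinite (g a) := by
    intro a
    refine hvlf.closure.subset fun z => ?_
    simp only [hg]; split_ifs <;> simp
  have hgclosed : ∀ a z, IsClosed (g a z) := by
    intro a z; simp only [hg]; split_ifs
    exacts [isClosed_empty, isClosed_closure]
  set V : X → Set X := fun a => (⋃ z, g a z)ᶜ with hV
  have hVo : ∀ a, IsOpen (V a) :=
    fun a => ((hglf a).isClosed_iUnion (hgclosed a)).isOpen_compl
  have haV : ∀ a, a ∈ V a := by
    intro a
    simp only [hV, mem_compl_iff, mem_iUnion]
    rintro ⟨z, hz⟩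
    simp only [hg] at hz
    split_ifs at hz with h
    · exact hz
    · exact h hz
  have hdisj : ∀ a ∈ A, ∀ b ∈ A, a ≠ b → Disjoint (V a) (V b) := by
    intro a ha b hb hab
    rw [Set.disjoint_left]
    intro x hxa hxb
    obtain ⟨z, hxz⟩ : ∃ z, x ∈ v z := by
      have := hvcov ▸ mem_univ x
      simpa using (hvcov.symm ▸ mem_univ x : x ∈ ⋃ z, v z)
    have hmem : ∀ c, c ∈ A → x ∈ V c → c = z := by
      intro c hc hxc
      by_contra hcz
      by_cases hccl : c ∈ closure (v z)
      · exact hcz (hclA z ⟨hccl, hc⟩)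
      · have : x ∈ ⋃ z', g c z' := by
          refine mem_iUnion.2 ⟨z, ?_⟩
          simp only [hg, if_neg hccl]
          exact subset_closure hxz
        exact hxc this
    exact hab ((hmem a ha hxa).trans (hmem b hb hxb).symm)
  -- use countable cellularity of `C`
  set φ : X → Set C := fun a => (Subtype.val : C → X) ⁻¹' (V a) with hφ
  have hφcount : (φ '' A).Countable := by
    refine hcc (φ '' A) ?_ ?_
    · rintro O ⟨a, ha, rfl⟩
      exact ⟨(hVo a).preimage continuous_subtype_val, ⟨⟨a, hAC ha⟩, haV a⟩⟩
    · rintro O ⟨a, ha, rfl⟩ O' ⟨b, hb, rfl⟩ hne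
      have hab : a ≠ b := by rintro rfl; exact hne rfl
      exact (hdisj a ha b hb hab).preimage _
  have hφinj : InjOn φ A := by
    intro a ha b hb hab
    by_contra hne
    have haVb : a ∈ V b := by
      have : (⟨a, hAC ha⟩ : C) ∈ φ a := haV a
      rw [hab] at this
      exact this
    exact (hdisj a ha b hb hne).le_bot ⟨haV a, haVb⟩ |>.elim
  have hAcount : A.Countable :=
    (mapsTo_image φ A).countable_of_injOn hφinj hφcount
  -- finally: `T` is a countable union of finite fibers
  have hTsub : T ⊆ ⋃ a ∈ A, {N ∈ 𝒢 | (N ∩ U a).Nonempty} := by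
    intro N hN
    refine mem_biUnion ⟨N, hN, rfl⟩ ⟨hN.1, ⟨f N, hfN N hN, mem_of_mem_nhds (hU (f N))⟩⟩
  exact (hAcount.biUnion fun a _ => (hUfin a).countable).mono hTsub

theorem sigma_locally_finite_meets_countably_cellular_countably
    {X : Type*} [TopologicalSpace X] [ParacompactSpace X] [T2Space X]
    (𝒩 : ℕ → Set (Set X))
    -- each family `𝒩 i` is locally finite:
    (hlf : ∀ i : ℕ, ∀ x : X, ∃ U ∈ nhds x,
      {N ∈ 𝒩 i | (N ∩ U).Nonempty}.Finite)
    (C : Set X)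
    -- `C` (with the subspace topology) is countably cellular:
    (hcc : ∀ 𝒪 : Set (Set C), (∀ O ∈ 𝒪, IsOpen O ∧ O.Nonempty) →
      𝒪.Pairwise Disjoint → 𝒪.Countable) :
    {N : Set X | N ∈ ⋃ i, 𝒩 i ∧ (C ∩ N).Nonempty}.Countable := by
  have : {N : Set X | N ∈ ⋃ i, 𝒩 i ∧ (C ∩ N).Nonempty}
      = ⋃ i, {N ∈ 𝒩 i | (C ∩ N).Nonempty} := by
    ext N
    simp only [Set.mem_setOf_eq, Set.mem_iUnion]
    tauto
  rw [this]
  exact Set.countable_iUnion fun i =>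
    locally_finite_meets_countably_cellular_countably_aux (𝒩 i) (hlf i) C hcc
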